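/- arXiv:2407.06528 — 2 statements merged into one kernel-verified Lean document; each statement's English description precedes it below -/
import Mathlib

section
/- For every α > 0, the mean-field operator 𝒯 is continuous on ℝ^T (with the sup norm), maps the cube [0,1]^T into itself, and admits at least one fixed point: there exists g* ∈ [0,1]^T with 𝒯(g*) = g*. -/
open MeasureTheory Matrix

/-- State–action value functions of the mean-field sensing problem, indexed by
time-to-go: `Qrev T lam A Γ μ g m e a = Q^g_{T-1-m}(e, a)`, defined by the backward
recursion `Q^g_k(e,a) = λ g_k a + ∫ [ e'ᵀ Γ_{k+1} e' + min_a' Q^g_{k+1}(e', a') ] dμ(w)`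
where `e' = (1-a) A e + w` and the terminal value `V^g_T ≡ 0`. -/
noncomputable def Qrev {n : ℕ} (T : ℕ) (lam : ℝ) (A : Matrix (Fin n) (Fin n) ℝ)
    (Γ : ℕ → Matrix (Fin n) (Fin n) ℝ) (μ : Measure (Fin n → ℝ)) (g : ℕ → ℝ) :
    ℕ → (Fin n → ℝ) → ℝ → ℝ
  | 0, e, a =>
      lam * g (T - 1) * a +
        ∫ w, ((1 - a) • (A *ᵥ e) + w) ⬝ᵥ ((Γ T) *ᵥ ((1 - a) • (A *ᵥ e) + w)) ∂μ
  | m + 1, e, a =>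
      lam * g (T - 1 - (m + 1)) * a +
        ∫ w,
          (((1 - a) • (A *ᵥ e) + w) ⬝ᵥ ((Γ (T - (m + 1))) *ᵥ ((1 - a) • (A *ᵥ e) + w)) +
            min (Qrev T lam A Γ μ g m ((1 - a) • (A *ᵥ e) + w) 0)
              (Qrev T lam A Γ μ g m ((1 - a) • (A *ᵥ e) + w) 1)) ∂μ

/-- `Qval T lam A Γ μ g k e a = Q^g_k(e,a)` for `0 ≤ k ≤ T-1`. -/
noncomputable def Qval {n : ℕ} (T : ℕ) (lam : ℝ) (A : Matrix (Fin n) (Fin n) ℝ)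
    (Γ : ℕ → Matrix (Fin n) (Fin n) ℝ) (μ : Measure (Fin n → ℝ)) (g : ℕ → ℝ)
    (k : ℕ) (e : Fin n → ℝ) (a : ℝ) : ℝ :=
  Qrev T lam A Γ μ g (T - 1 - k) e a

/-- Value of information `VoI^g_k(e) = Q^g_k(e,0) - Q^g_k(e,1)`. -/
noncomputable def VoI {n : ℕ} (T : ℕ) (lam : ℝ) (A : Matrix (Fin n) (Fin n) ℝ)
    (Γ : ℕ → Matrix (Fin n) (Fin n) ℝ) (μ : Measure (Fin n → ℝ)) (g : ℕ → ℝ)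
    (k : ℕ) (e : Fin n → ℝ) : ℝ :=
  Qval T lam A Γ μ g k e 0 - Qval T lam A Γ μ g k e 1

/-- Extension of a finite sequence `g ∈ ℝ^T` to `ℕ → ℝ` (by zero). -/
def extendSeq (T : ℕ) (g : Fin T → ℝ) : ℕ → ℝ :=
  fun j => if h : j < T then g ⟨j, h⟩ else 0

/-- The Boltzmann (logistic) function `σ_α(x) = 1/(1 + exp(-α x))`. -/
noncomputable def boltz (α x : ℝ) : ℝ := (1 + Real.exp (-α * x))⁻¹

/-- The mean-field operator `(𝒯 g)_k = ∫ σ_α(VoI^g_k(e)) dν_k(e)`. -/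
noncomputable def Tmf {n : ℕ} (T : ℕ) (lam α : ℝ) (A : Matrix (Fin n) (Fin n) ℝ)
    (Γ : ℕ → Matrix (Fin n) (Fin n) ℝ) (μ : Measure (Fin n → ℝ))
    (ν : Fin T → Measure (Fin n → ℝ)) (g : Fin T → ℝ) : Fin T → ℝ :=
  fun k => ∫ e, boltz α (VoI T lam A Γ μ (extendSeq T g) (k : ℕ) e) ∂(ν k)


open Filter




noncomputable def matC {n : ℕ} (M : Matrix (Fin n) (Fin n) ℝ) : ℝ := ∑ i, ∑ j, |M i j|

lemma matC_nonneg {n : ℕ} (M : Matrix (Fin n) (Fin n) ℝ) : 0 ≤ matC M :=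
  Finset.sum_nonneg fun _ _ => Finset.sum_nonneg fun _ _ => abs_nonneg _

lemma mulVec_abs_apply_le {n : ℕ} (M : Matrix (Fin n) (Fin n) ℝ) (v : Fin n → ℝ) (i : Fin n) :
    |(M *ᵥ v) i| ≤ (∑ j, |M i j|) * ‖v‖ := by
  have h : (M *ᵥ v) i = ∑ j, M i j * v j := rfl
  rw [h]
  calc |∑ j, M i j * v j| ≤ ∑ j, |M i j * v j| := Finset.abs_sum_le_sum_abs _ _
    _ ≤ ∑ j, |M i j| * ‖v‖ := by
        refine Finset.sum_le_sum fun j _ => ?_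
        rw [abs_mul]
        exact mul_le_mul_of_nonneg_left (by simpa [Real.norm_eq_abs] using norm_le_pi_norm v j) (abs_nonneg _)
    _ = (∑ j, |M i j|) * ‖v‖ := by rw [Finset.sum_mul]

lemma norm_mulVec_le {n : ℕ} (M : Matrix (Fin n) (Fin n) ℝ) (v : Fin n → ℝ) :
    ‖M *ᵥ v‖ ≤ matC M * ‖v‖ := by
  rw [pi_norm_le_iff_of_nonneg (mul_nonneg (matC_nonneg M) (norm_nonneg v))]
  intro i
  refine le_trans (by simpa [Real.norm_eq_abs] using mulVec_abs_apply_le M v i) ?_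
  exact mul_le_mul_of_nonneg_right
    (Finset.single_le_sum (f := fun i => ∑ j, |M i j|)
      (fun _ _ => Finset.sum_nonneg fun _ _ => abs_nonneg _) (Finset.mem_univ i)) (norm_nonneg v)

lemma abs_quad_le {n : ℕ} (M : Matrix (Fin n) (Fin n) ℝ) (v : Fin n → ℝ) :
    |v ⬝ᵥ (M *ᵥ v)| ≤ matC M * ‖v‖ ^ 2 := by
  have h : v ⬝ᵥ (M *ᵥ v) = ∑ i, v i * (M *ᵥ v) i := rfl
  rw [h]
  calc |∑ i, v i * (M *ᵥ v) i| ≤ ∑ i, |v i * (M *ᵥ v) i| := Finset.abs_sum_le_sum_abs _ _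
    _ ≤ ∑ i, ‖v‖ * ((∑ j, |M i j|) * ‖v‖) := by
        refine Finset.sum_le_sum fun i _ => ?_
        rw [abs_mul]
        refine mul_le_mul (by simpa [Real.norm_eq_abs] using norm_le_pi_norm v i)
          (mulVec_abs_apply_le M v i) (abs_nonneg _) (norm_nonneg v)
    _ = matC M * ‖v‖ ^ 2 := by
        rw [matC, Finset.sum_mul]
        exact Finset.sum_congr rfl fun i _ => by ring

lemma continuous_mulVec {n : ℕ} (M : Matrix (Fin n) (Fin n) ℝ) :
    Continuous fun v : Fin n → ℝ => M *ᵥ v := by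
  refine continuous_pi fun i => ?_
  have : (fun v : Fin n → ℝ => (M *ᵥ v) i) = fun v => ∑ j, M i j * v j := rfl
  rw [this]
  exact continuous_finset_sum _ fun j _ => continuous_const.mul (continuous_apply j)

lemma continuous_quad {n : ℕ} (M : Matrix (Fin n) (Fin n) ℝ) :
    Continuous fun v : Fin n → ℝ => v ⬝ᵥ (M *ᵥ v) := by
  have : (fun v : Fin n → ℝ => v ⬝ᵥ (M *ᵥ v)) = fun v => ∑ i, v i * ∑ j, M i j * v j := rfl
  rw [this]
  exact continuous_finset_sum _ fun i _ => (continuous_apply i).mul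
    (continuous_finset_sum _ fun j _ => continuous_const.mul (continuous_apply j))

section Int
variable {n : ℕ} {μ : Measure (Fin n → ℝ)} [IsProbabilityMeasure μ]

lemma integrable_norm_self (hmom : Integrable (fun w : Fin n → ℝ => ‖w‖ ^ 2) μ) :
    Integrable (fun w : Fin n → ℝ => ‖w‖) μ := by
  refine ((integrable_const (1 : ℝ)).add hmom).mono' continuous_norm.aestronglyMeasurable
    (ae_of_all _ fun w => ?_)
  have h := norm_nonneg w
  show ‖‖w‖‖ ≤ 1 + ‖w‖ ^ 2
  simp only [Real.norm_eq_abs, abs_of_nonneg h]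
  nlinarith

lemma integrable_beta (hmom : Integrable (fun w : Fin n → ℝ => ‖w‖ ^ 2) μ) :
    Integrable (fun w : Fin n → ℝ => (1 + ‖w‖) ^ 2) μ := by
  have h : Integrable (fun w : Fin n → ℝ => 1 + 2 * ‖w‖ + ‖w‖ ^ 2) μ :=
    ((integrable_const (1 : ℝ)).add ((integrable_norm_self hmom).const_mul 2)).add hmom
  exact h.congr (ae_of_all _ fun w => by ring)

end Int

lemma bnd_aux {C K x v : ℝ} (hC : 0 ≤ C) (hK : 0 ≤ K) (hv : 0 ≤ v) (hx : 0 ≤ x)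
    (h : x ≤ K + v) : C * (1 + x ^ 2) ≤ 2 * C * ((1 + K) ^ 2 * (1 + v) ^ 2) := by
  have hKV : x ≤ (1 + K) * (1 + v) := by nlinarith
  have h2 : x ^ 2 ≤ ((1 + K) * (1 + v)) ^ 2 := by nlinarith
  have h1 : (1 : ℝ) ≤ (1 + K) * (1 + v) := by nlinarith
  have h3 : (1 : ℝ) ≤ ((1 + K) * (1 + v)) ^ 2 := by nlinarith
  calc C * (1 + x ^ 2) ≤ C * (((1 + K) * (1 + v)) ^ 2 + ((1 + K) * (1 + v)) ^ 2) := by nlinarith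
    _ = 2 * C * ((1 + K) ^ 2 * (1 + v) ^ 2) := by ring

lemma norm_trans_le {n : ℕ} (A : Matrix (Fin n) (Fin n) ℝ) (e : Fin n → ℝ) (a : ℝ)
    (w : Fin n → ℝ) : ‖(1 - a) • (A *ᵥ e) + w‖ ≤ (1 + |a|) * (matC A * ‖e‖) + ‖w‖ := by
  refine le_trans (norm_add_le _ _) ?_
  have h1 : ‖(1 - a) • (A *ᵥ e)‖ ≤ (1 + |a|) * (matC A * ‖e‖) := by
    rw [norm_smul, Real.norm_eq_abs]
    have h2 : |1 - a| ≤ 1 + |a| := by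
      rw [sub_eq_add_neg]
      simpa using abs_add_le 1 (-a)
    exact mul_le_mul h2 (norm_mulVec_le A e) (norm_nonneg _) (by positivity)
  linarith

lemma step_aux {n : ℕ} (T : ℕ) (lam : ℝ) (A : Matrix (Fin n) (Fin n) ℝ)
    (μ : Measure (Fin n → ℝ)) [IsProbabilityMeasure μ]
    (hmom : Integrable (fun w : Fin n → ℝ => ‖w‖ ^ 2) μ)
    (h : (ℕ → ℝ) → (Fin n → ℝ) → ℝ) (j₀ : ℕ) (hj : j₀ < T)
    (hb : ∀ R : ℝ, 1 ≤ R → ∃ C, 0 ≤ C ∧ ∀ (g : ℕ → ℝ) (e' : Fin n → ℝ),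
      (∀ j, j < T → |g j| ≤ R) → |h g e'| ≤ C * (1 + ‖e'‖ ^ 2))
    (hc : Continuous fun q : (ℕ → ℝ) × (Fin n → ℝ) => h q.1 q.2) :
    (∀ R : ℝ, 1 ≤ R → ∃ C, 0 ≤ C ∧ ∀ (g : ℕ → ℝ) (e : Fin n → ℝ) (a : ℝ),
      (∀ j, j < T → |g j| ≤ R) → |a| ≤ R →
      |lam * g j₀ * a + ∫ w, h g ((1 - a) • (A *ᵥ e) + w) ∂μ| ≤ C * (1 + ‖e‖ ^ 2)) ∧
    Continuous (fun p : (ℕ → ℝ) × (Fin n → ℝ) × ℝ =>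
      lam * p.1 j₀ * p.2.2 + ∫ w, h p.1 ((1 - p.2.2) • (A *ᵥ p.2.1) + w) ∂μ) := by
  have hcA : 0 ≤ matC A := matC_nonneg A
  have hMβ : 0 ≤ ∫ w, (1 + ‖w‖) ^ 2 ∂μ := integral_nonneg fun w => by positivity
  set Mβ := ∫ w, (1 + ‖w‖) ^ 2 ∂μ with hMβdef
  constructor
  · -- growth bound
    intro R hR
    obtain ⟨C, hC, hCb⟩ := hb R hR
    set c₁ := (1 + R) * matC A with hc₁def
    have hc₁ : 0 ≤ c₁ := by positivity
    refine ⟨|lam| * R ^ 2 + 4 * C * (1 + c₁) ^ 2 * Mβ, by positivity, ?_⟩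
    intro g e a hg ha
    have hu : 0 ≤ ‖e‖ := norm_nonneg e
    -- bound the linear term
    have habs : |lam * g j₀ * a| ≤ |lam| * R ^ 2 := by
      rw [abs_mul, abs_mul]
      have h1 := hg j₀ hj
      have h2 := abs_nonneg (g j₀)
      have h3 := abs_nonneg a
      have h4 := abs_nonneg lam
      have h5 : |g j₀| * |a| ≤ R * R := mul_le_mul h1 ha h3 (le_trans h2 h1)
      nlinarith [mul_le_mul_of_nonneg_left h5 h4]
    -- bound the integral term
    have hint : |∫ w, h g ((1 - a) • (A *ᵥ e) + w) ∂μ| ≤ (2 * C * (1 + c₁ * ‖e‖) ^ 2) * Mβ := by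
      have hbd : ∀ w : Fin n → ℝ, ‖h g ((1 - a) • (A *ᵥ e) + w)‖ ≤
          (2 * C * (1 + c₁ * ‖e‖) ^ 2) * (1 + ‖w‖) ^ 2 := by
        intro w
        have he2 : ‖(1 - a) • (A *ᵥ e) + w‖ ≤ c₁ * ‖e‖ + ‖w‖ := by
          refine le_trans (norm_trans_le A e a w) ?_
          have : (1 + |a|) * (matC A * ‖e‖) ≤ c₁ * ‖e‖ := by
            rw [hc₁def]
            nlinarith [mul_nonneg (mul_nonneg (sub_nonneg.mpr ha) hcA) hu]
          linarith
        refine le_trans ?_ (le_of_eq (by ring :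
          2 * C * ((1 + c₁ * ‖e‖) ^ 2 * (1 + ‖w‖) ^ 2) = (2 * C * (1 + c₁ * ‖e‖) ^ 2) * (1 + ‖w‖) ^ 2))
        refine le_trans ?_ (bnd_aux hC (by positivity) (norm_nonneg w) (norm_nonneg _) he2)
        simpa [Real.norm_eq_abs] using hCb g ((1 - a) • (A *ᵥ e) + w) hg
      have hn := norm_integral_le_of_norm_le
        ((integrable_beta hmom).const_mul (2 * C * (1 + c₁ * ‖e‖) ^ 2)) (ae_of_all _ hbd)
      rwa [Real.norm_eq_abs, integral_const_mul] at hn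
    have hKe : (1 + c₁ * ‖e‖) ^ 2 ≤ 2 * (1 + c₁) ^ 2 * (1 + ‖e‖ ^ 2) := by
      nlinarith [sq_nonneg (1 + c₁ * ‖e‖), mul_nonneg hc₁ hu, sq_nonneg (‖e‖ - 1),
        sq_nonneg ((1 + c₁) * (1 + ‖e‖) - (1 + c₁ * ‖e‖)), mul_nonneg (mul_nonneg hc₁ hc₁) hu]
    calc |lam * g j₀ * a + ∫ w, h g ((1 - a) • (A *ᵥ e) + w) ∂μ|
        ≤ |lam * g j₀ * a| + |∫ w, h g ((1 - a) • (A *ᵥ e) + w) ∂μ| := abs_add_le _ _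
      _ ≤ |lam| * R ^ 2 + (2 * C * (1 + c₁ * ‖e‖) ^ 2) * Mβ := by linarith
      _ ≤ (|lam| * R ^ 2 + 4 * C * (1 + c₁) ^ 2 * Mβ) * (1 + ‖e‖ ^ 2) := by
          nlinarith [mul_le_mul_of_nonneg_left hKe (mul_nonneg (mul_nonneg (by norm_num : (0:ℝ) ≤ 2) hC) hMβ),
            mul_nonneg (abs_nonneg lam) (sq_nonneg R), sq_nonneg ‖e‖]
  · -- continuity
    rw [continuous_iff_continuousAt]
    intro p₀
    have hcont1 : Continuous (fun p : (ℕ → ℝ) × (Fin n → ℝ) × ℝ => lam * p.1 j₀ * p.2.2) :=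
      (continuous_const.mul ((continuous_apply j₀).comp continuous_fst)).mul
        (continuous_snd.comp continuous_snd)
    refine ContinuousAt.add hcont1.continuousAt ?_
    have hsum0 : (0:ℝ) ≤ ∑ j ∈ Finset.range T, |p₀.1 j| :=
      Finset.sum_nonneg fun _ _ => abs_nonneg _
    set R := 1 + ‖p₀.2.1‖ + |p₀.2.2| + ∑ j ∈ Finset.range T, |p₀.1 j| with hRdef
    have hR1 : 1 ≤ R := by
      have := norm_nonneg p₀.2.1; have := abs_nonneg p₀.2.2
      rw [hRdef]; linarith
    obtain ⟨C, hC, hCb⟩ := hb R hR1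
    set c₁ := (1 + R) * matC A with hc₁def
    have hc₁ : 0 ≤ c₁ := by positivity
    set K₀ := c₁ * R with hK₀def
    have hK₀ : 0 ≤ K₀ := by positivity
    refine continuousAt_of_dominated (bound := fun w => (2 * C * (1 + K₀) ^ 2) * (1 + ‖w‖) ^ 2)
      ?_ ?_ ((integrable_beta hmom).const_mul _) ?_
    · refine Eventually.of_forall fun p => ?_
      exact (hc.comp (continuous_const.prodMk (continuous_const.add continuous_id))).aestronglyMeasurable
    · -- eventual bound
      have hev1 : ∀ᶠ p : (ℕ → ℝ) × (Fin n → ℝ) × ℝ in nhds p₀, ‖p.2.1‖ < R := by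
        have hcn : Continuous fun p : (ℕ → ℝ) × (Fin n → ℝ) × ℝ => ‖p.2.1‖ :=
          (continuous_fst.comp continuous_snd).norm
        have hlt : ‖p₀.2.1‖ < R := by rw [hRdef]; have := abs_nonneg p₀.2.2; linarith
        exact eventually_of_mem ((isOpen_lt hcn continuous_const).mem_nhds hlt) fun p hp => hp
      have hev2 : ∀ᶠ p : (ℕ → ℝ) × (Fin n → ℝ) × ℝ in nhds p₀, |p.2.2| < R := by
        have hcn : Continuous fun p : (ℕ → ℝ) × (Fin n → ℝ) × ℝ => |p.2.2| :=
          (continuous_snd.comp continuous_snd).abs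
        have hlt : |p₀.2.2| < R := by rw [hRdef]; have := norm_nonneg p₀.2.1; linarith
        exact eventually_of_mem ((isOpen_lt hcn continuous_const).mem_nhds hlt) fun p hp => hp
      have hev3 : ∀ᶠ p : (ℕ → ℝ) × (Fin n → ℝ) × ℝ in nhds p₀,
          ∀ j ∈ Finset.range T, |p.1 j| < R := by
        rw [eventually_all_finset]
        intro j hjr
        have hcn : Continuous fun p : (ℕ → ℝ) × (Fin n → ℝ) × ℝ => |p.1 j| :=
          ((continuous_apply j).comp continuous_fst).abs
        have hlt : |p₀.1 j| < R := by
          have hle : |p₀.1 j| ≤ ∑ j ∈ Finset.range T, |p₀.1 j| :=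
            Finset.single_le_sum (f := fun j => |p₀.1 j|) (fun _ _ => abs_nonneg _) hjr
          have := norm_nonneg p₀.2.1; have := abs_nonneg p₀.2.2
          rw [hRdef]; linarith
        exact eventually_of_mem ((isOpen_lt hcn continuous_const).mem_nhds hlt) fun p hp => hp
      filter_upwards [hev1, hev2, hev3] with p h1 h2 h3
      refine ae_of_all _ fun w => ?_
      have hg : ∀ j, j < T → |p.1 j| ≤ R := fun j hjT =>
        le_of_lt (h3 j (Finset.mem_range.mpr hjT))
      have he2 : ‖(1 - p.2.2) • (A *ᵥ p.2.1) + w‖ ≤ K₀ + ‖w‖ := by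
        refine le_trans (norm_trans_le A p.2.1 p.2.2 w) ?_
        have : (1 + |p.2.2|) * (matC A * ‖p.2.1‖) ≤ K₀ := by
          rw [hK₀def, hc₁def]
          have h4 := abs_nonneg p.2.2
          have h5 := norm_nonneg p.2.1
          nlinarith [mul_nonneg (mul_nonneg (sub_nonneg.mpr h2.le) hcA) h5,
            mul_nonneg (mul_nonneg (by linarith : (0:ℝ) ≤ 1 + R) hcA) (sub_nonneg.mpr h1.le)]
        linarith
      refine le_trans ?_ (le_of_eq (by ring :
        2 * C * ((1 + K₀) ^ 2 * (1 + ‖w‖) ^ 2) = (2 * C * (1 + K₀) ^ 2) * (1 + ‖w‖) ^ 2))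
      refine le_trans ?_ (bnd_aux hC hK₀ (norm_nonneg w) (norm_nonneg _) he2)
      simpa [Real.norm_eq_abs] using hCb p.1 ((1 - p.2.2) • (A *ᵥ p.2.1) + w) hg
    · refine ae_of_all _ fun w => ?_
      have : Continuous (fun p : (ℕ → ℝ) × (Fin n → ℝ) × ℝ =>
          h p.1 ((1 - p.2.2) • (A *ᵥ p.2.1) + w)) := by
        refine hc.comp (continuous_fst.prodMk ?_)
        exact ((continuous_const.sub (continuous_snd.comp continuous_snd)).smul
          ((continuous_mulVec A).comp (continuous_fst.comp continuous_snd))).add continuous_const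
      exact this.continuousAt

lemma qrev_key {n : ℕ} (T : ℕ) (hT : 1 ≤ T) (lam : ℝ) (A : Matrix (Fin n) (Fin n) ℝ)
    (Γ : ℕ → Matrix (Fin n) (Fin n) ℝ) (μ : Measure (Fin n → ℝ)) [IsProbabilityMeasure μ]
    (hmom : Integrable (fun w : Fin n → ℝ => ‖w‖ ^ 2) μ) (m : ℕ) :
    (∀ R : ℝ, 1 ≤ R → ∃ C, 0 ≤ C ∧ ∀ (g : ℕ → ℝ) (e : Fin n → ℝ) (a : ℝ),
      (∀ j, j < T → |g j| ≤ R) → |a| ≤ R →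
      |Qrev T lam A Γ μ g m e a| ≤ C * (1 + ‖e‖ ^ 2)) ∧
    Continuous (fun p : (ℕ → ℝ) × (Fin n → ℝ) × ℝ => Qrev T lam A Γ μ p.1 m p.2.1 p.2.2) := by
  induction m with
  | zero =>
      have H := step_aux T lam A μ hmom (fun g e' => e' ⬝ᵥ (Γ T *ᵥ e')) (T - 1)
        (Nat.sub_lt hT one_pos)
        (fun R hR => ⟨matC (Γ T), matC_nonneg _, fun g e' _ => by
          have := abs_quad_le (Γ T) e'
          nlinarith [matC_nonneg (Γ T)]⟩)
        ((continuous_quad (Γ T)).comp continuous_snd)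
      exact ⟨fun R hR => by simpa only [Qrev] using H.1 R hR, by simpa only [Qrev] using H.2⟩
  | succ m ih =>
      have H := step_aux T lam A μ hmom
        (fun g e' => e' ⬝ᵥ (Γ (T - (m + 1)) *ᵥ e') +
          min (Qrev T lam A Γ μ g m e' 0) (Qrev T lam A Γ μ g m e' 1)) (T - 1 - (m + 1))
        (lt_of_le_of_lt (Nat.sub_le _ _) (Nat.sub_lt hT one_pos))
        (fun R hR => by
          obtain ⟨C, hC, hCb⟩ := ih.1 R hR
          refine ⟨matC (Γ (T - (m + 1))) + C, add_nonneg (matC_nonneg _) hC, fun g e' hg => ?_⟩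
          have h1 := abs_quad_le (Γ (T - (m + 1))) e'
          have h2 := hCb g e' 0 hg (by simpa using hR.trans' zero_le_one)
          have h3 := hCb g e' 1 hg (by simpa using hR)
          have h4 : |min (Qrev T lam A Γ μ g m e' 0) (Qrev T lam A Γ μ g m e' 1)| ≤
              C * (1 + ‖e'‖ ^ 2) := by
            refine le_trans (abs_min_le_max_abs_abs) (max_le h2 h3)
          have h5 := abs_add_le (e' ⬝ᵥ (Γ (T - (m + 1)) *ᵥ e'))
            (min (Qrev T lam A Γ μ g m e' 0) (Qrev T lam A Γ μ g m e' 1))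
          nlinarith [matC_nonneg (Γ (T - (m + 1))), sq_nonneg ‖e'‖])
        (by
          refine (((continuous_quad (Γ (T - (m + 1)))).comp continuous_snd).add ?_)
          exact (ih.2.comp (continuous_fst.prodMk (continuous_snd.prodMk continuous_const))).min
            (ih.2.comp (continuous_fst.prodMk (continuous_snd.prodMk continuous_const))))
      exact ⟨fun R hR => by simpa only [Qrev] using H.1 R hR, by simpa only [Qrev] using H.2⟩

lemma qrev_congr {n : ℕ} (T : ℕ) (lam : ℝ) (A : Matrix (Fin n) (Fin n) ℝ)
    (Γ : ℕ → Matrix (Fin n) (Fin n) ℝ) (μ : Measure (Fin n → ℝ)) :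
    ∀ (m : ℕ) (g g' : ℕ → ℝ), (∀ j, T - 1 - m ≤ j → g j = g' j) →
      ∀ (e : Fin n → ℝ) (a : ℝ), Qrev T lam A Γ μ g m e a = Qrev T lam A Γ μ g' m e a := by
  intro m
  induction m with
  | zero =>
      intro g g' hgg e a
      simp only [Qrev, hgg (T - 1) le_rfl]
  | succ m ih =>
      intro g g' hgg e a
      have hmono : ∀ j, T - 1 - m ≤ j → g j = g' j := fun j hj =>
        hgg j (le_trans (Nat.sub_le_sub_left (Nat.le_succ m) (T - 1)) hj)
      simp only [Qrev, hgg (T - 1 - (m + 1)) le_rfl]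
      congr 1
      refine integral_congr_ae (ae_of_all _ fun w => ?_)
      simp only [ih g g' hmono]

lemma continuous_extendSeq (T : ℕ) : Continuous fun g : Fin T → ℝ => extendSeq T g := by
  refine continuous_pi fun j => ?_
  by_cases h : j < T
  · simp only [extendSeq, dif_pos h]
    exact continuous_apply _
  · simp only [extendSeq, dif_neg h]
    exact continuous_const

lemma boltz_mem (α x : ℝ) : boltz α x ∈ Set.Icc (0 : ℝ) 1 := by
  have h : (0 : ℝ) < 1 + Real.exp (-α * x) := by positivity
  constructor
  · exact le_of_lt (inv_pos.mpr h)
  · rw [boltz]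
    rw [inv_le_one_iff₀]
    right
    nlinarith [Real.exp_pos (-α * x)]

lemma continuous_boltz (α : ℝ) : Continuous (boltz α) := by
  have h : ∀ x : ℝ, 1 + Real.exp (-α * x) ≠ 0 := fun x => by positivity
  exact (continuous_const.add ((continuous_const.mul continuous_id).rexp)).inv₀ h

lemma continuous_voi {n : ℕ} (T : ℕ) (hT : 1 ≤ T) (lam : ℝ) (A : Matrix (Fin n) (Fin n) ℝ)
    (Γ : ℕ → Matrix (Fin n) (Fin n) ℝ) (μ : Measure (Fin n → ℝ)) [IsProbabilityMeasure μ]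
    (hmom : Integrable (fun w : Fin n → ℝ => ‖w‖ ^ 2) μ) (k : ℕ) :
    Continuous fun q : (Fin T → ℝ) × (Fin n → ℝ) =>
      VoI T lam A Γ μ (extendSeq T q.1) k q.2 := by
  have hQ := (qrev_key T hT lam A Γ μ hmom (T - 1 - k)).2
  have h0 : Continuous fun q : (Fin T → ℝ) × (Fin n → ℝ) =>
      Qrev T lam A Γ μ (extendSeq T q.1) (T - 1 - k) q.2 (0 : ℝ) :=
    hQ.comp (((continuous_extendSeq T).comp continuous_fst).prodMk
      (continuous_snd.prodMk continuous_const))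
  have h1 : Continuous fun q : (Fin T → ℝ) × (Fin n → ℝ) =>
      Qrev T lam A Γ μ (extendSeq T q.1) (T - 1 - k) q.2 (1 : ℝ) :=
    hQ.comp (((continuous_extendSeq T).comp continuous_fst).prodMk
      (continuous_snd.prodMk continuous_const))
  exact h0.sub h1

lemma tmf_continuous {n T : ℕ} (hT : 1 ≤ T) (lam α : ℝ) (A : Matrix (Fin n) (Fin n) ℝ)
    (Γ : ℕ → Matrix (Fin n) (Fin n) ℝ) (μ : Measure (Fin n → ℝ)) [IsProbabilityMeasure μ]
    (hmom : Integrable (fun w : Fin n → ℝ => ‖w‖ ^ 2) μ)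
    (ν : Fin T → Measure (Fin n → ℝ)) [∀ k, IsProbabilityMeasure (ν k)] :
    Continuous (Tmf T lam α A Γ μ ν) := by
  refine continuous_pi fun k => ?_
  refine continuous_of_dominated (bound := fun _ => 1) ?_ ?_ (integrable_const 1) ?_
  · intro g
    exact ((continuous_boltz α).comp
      ((continuous_voi T hT lam A Γ μ hmom k).comp
        (continuous_const.prodMk continuous_id))).aestronglyMeasurable
  · intro g
    refine ae_of_all _ fun e => ?_
    have := boltz_mem α (VoI T lam A Γ μ (extendSeq T g) (k : ℕ) e)
    rw [Real.norm_eq_abs, abs_of_nonneg this.1]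
    exact this.2
  · refine ae_of_all _ fun e => ?_
    exact (continuous_boltz α).comp
      ((continuous_voi T hT lam A Γ μ hmom k).comp (continuous_id.prodMk continuous_const))

lemma tmf_mem {n T : ℕ} (hT : 1 ≤ T) (lam α : ℝ) (A : Matrix (Fin n) (Fin n) ℝ)
    (Γ : ℕ → Matrix (Fin n) (Fin n) ℝ) (μ : Measure (Fin n → ℝ)) [IsProbabilityMeasure μ]
    (hmom : Integrable (fun w : Fin n → ℝ => ‖w‖ ^ 2) μ)
    (ν : Fin T → Measure (Fin n → ℝ)) [∀ k, IsProbabilityMeasure (ν k)]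
    (g : Fin T → ℝ) (k : Fin T) : Tmf T lam α A Γ μ ν g k ∈ Set.Icc (0 : ℝ) 1 := by
  have hibl : Integrable (fun e => boltz α (VoI T lam A Γ μ (extendSeq T g) (k : ℕ) e)) (ν k) := by
    refine (integrable_const (1 : ℝ)).mono' ?_ (ae_of_all _ fun e => ?_)
    · exact ((continuous_boltz α).comp
        ((continuous_voi T hT lam A Γ μ hmom k).comp
          (continuous_const.prodMk continuous_id))).aestronglyMeasurable
    · have := boltz_mem α (VoI T lam A Γ μ (extendSeq T g) (k : ℕ) e)
      rw [Real.norm_eq_abs, abs_of_nonneg this.1]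
      exact this.2
  constructor
  · exact integral_nonneg fun e => (boltz_mem α _).1
  · calc Tmf T lam α A Γ μ ν g k ≤ ∫ _, (1 : ℝ) ∂(ν k) :=
        integral_mono hibl (integrable_const 1) fun e => (boltz_mem α _).2
      _ = 1 := by simp

lemma tmf_congr {n T : ℕ} (hT : 1 ≤ T) (lam α : ℝ) (A : Matrix (Fin n) (Fin n) ℝ)
    (Γ : ℕ → Matrix (Fin n) (Fin n) ℝ) (μ : Measure (Fin n → ℝ))
    (ν : Fin T → Measure (Fin n → ℝ)) (g g' : Fin T → ℝ) (k : Fin T)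
    (h : ∀ j : Fin T, (k : ℕ) ≤ (j : ℕ) → g j = g' j) :
    Tmf T lam α A Γ μ ν g k = Tmf T lam α A Γ μ ν g' k := by
  have hkT : (k : ℕ) ≤ T - 1 := Nat.le_pred_of_lt k.isLt
  have hcond : ∀ j, T - 1 - (T - 1 - (k : ℕ)) ≤ j → extendSeq T g j = extendSeq T g' j := by
    intro j hj
    rw [Nat.sub_sub_self hkT] at hj
    by_cases hjT : j < T
    · simp only [extendSeq, dif_pos hjT]
      exact h ⟨j, hjT⟩ hj
    · simp only [extendSeq, dif_neg hjT]
  have hq := qrev_congr T lam A Γ μ (T - 1 - (k : ℕ)) (extendSeq T g) (extendSeq T g') hcond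
  unfold Tmf VoI Qval
  refine integral_congr_ae (ae_of_all _ fun e => ?_)
  simp only [hq]

lemma tmf_fixed {n T : ℕ} (hT : 1 ≤ T) (lam α : ℝ) (A : Matrix (Fin n) (Fin n) ℝ)
    (Γ : ℕ → Matrix (Fin n) (Fin n) ℝ) (μ : Measure (Fin n → ℝ)) [IsProbabilityMeasure μ]
    (hmom : Integrable (fun w : Fin n → ℝ => ‖w‖ ^ 2) μ)
    (ν : Fin T → Measure (Fin n → ℝ)) [∀ k, IsProbabilityMeasure (ν k)] :
    ∃ gs : Fin T → ℝ, (∀ k, gs k ∈ Set.Icc (0 : ℝ) 1) ∧ Tmf T lam α A Γ μ ν gs = gs := by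
  have key : ∀ s : ℕ, s ≤ T → ∃ gs : Fin T → ℝ, (∀ k, gs k ∈ Set.Icc (0 : ℝ) 1) ∧
      ∀ k : Fin T, T - s ≤ (k : ℕ) → Tmf T lam α A Γ μ ν gs k = gs k := by
    intro s
    induction s with
    | zero =>
        intro _
        exact ⟨fun _ => 0, fun _ => ⟨le_rfl, zero_le_one⟩,
          fun k hk => absurd k.isLt (by omega)⟩
    | succ s ih =>
        intro hsT
        obtain ⟨gs, hcube, hfix⟩ := ih (le_trans (Nat.le_succ s) hsT)
        set k₀ : Fin T := ⟨T - s - 1, by omega⟩ with hk₀def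
        have hupd : Continuous fun x : ℝ => Function.update gs k₀ x := by
          refine continuous_pi fun j => ?_
          by_cases hj : j = k₀
          · simp only [Function.update_apply, if_pos hj]
            exact continuous_id
          · simp only [Function.update_apply, if_neg hj]
            exact continuous_const
        set f := fun x : ℝ => Tmf T lam α A Γ μ ν (Function.update gs k₀ x) k₀ with hfdef
        have hf : Continuous f :=
          ((continuous_apply k₀).comp (tmf_continuous hT lam α A Γ μ hmom ν)).comp hupd
        have h0 : 0 ≤ f 0 := (tmf_mem hT lam α A Γ μ hmom ν _ k₀).1
        have h1 : f 1 ≤ 1 := (tmf_mem hT lam α A Γ μ hmom ν _ k₀).2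
        have hsub := intermediate_value_Icc' (by norm_num : (0:ℝ) ≤ 1)
          ((hf.sub continuous_id).continuousOn (s := Set.Icc 0 1))
        have h0' : (0 : ℝ) ∈ Set.Icc (f 1 - 1) (f 0 - 0) := ⟨by linarith, by simp [h0]⟩
        obtain ⟨x, hxI, hxeq⟩ := hsub h0'
        have hfx : f x = x := by
          have : f x - x = 0 := hxeq
          linarith
        refine ⟨Function.update gs k₀ x, ?_, ?_⟩
        · intro k
          rw [Function.update_apply]
          split
          · exact hxI
          · exact hcube k
        · intro k hk
          by_cases hke : k = k₀
          · subst hke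
            rw [Function.update_self]
            exact hfx
          · have hk2 : T - s ≤ (k : ℕ) := by
              have hne : (k : ℕ) ≠ T - s - 1 := fun hc => hke (Fin.ext hc)
              omega
            have hcongr : Tmf T lam α A Γ μ ν (Function.update gs k₀ x) k =
                Tmf T lam α A Γ μ ν gs k := by
              refine tmf_congr hT lam α A Γ μ ν _ _ k fun j hj => ?_
              have hjne : j ≠ k₀ := by
                intro hc
                have : (j : ℕ) = T - s - 1 := by rw [hc]
                omega
              exact Function.update_of_ne hjne x gs
            rw [hcongr, hfix k hk2, Function.update_of_ne hke]
  obtain ⟨gs, hcube, hfix⟩ := key T le_rfl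
  exact ⟨gs, hcube, funext fun k => hfix k (by omega)⟩

/-- For every `α > 0`, the mean-field operator `𝒯` is continuous on `ℝ^T` (sup norm),
maps the cube `[0,1]^T` into itself, and admits at least one fixed point in `[0,1]^T`. -/
theorem mean_field_operator_continuous_and_fixed_point_exists
    {n T : ℕ} (hT : 1 ≤ T) (lam α : ℝ) (hlam : 0 < lam) (hα : 0 < α)
    (A : Matrix (Fin n) (Fin n) ℝ) (Γ : ℕ → Matrix (Fin n) (Fin n) ℝ)
    (hΓ : ∀ k, (Γ k).PosSemidef)
    (μ : Measure (Fin n → ℝ)) [IsProbabilityMeasure μ]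
    (hmom : Integrable (fun w => ‖w‖ ^ 2) μ)
    (ν : Fin T → Measure (Fin n → ℝ)) [∀ k, IsProbabilityMeasure (ν k)] :
    Continuous (Tmf T lam α A Γ μ ν) ∧
      (∀ g : Fin T → ℝ, (∀ k, g k ∈ Set.Icc (0 : ℝ) 1) →
        ∀ k, Tmf T lam α A Γ μ ν g k ∈ Set.Icc (0 : ℝ) 1) ∧
      ∃ gs : Fin T → ℝ,
        (∀ k, gs k ∈ Set.Icc (0 : ℝ) 1) ∧ Tmf T lam α A Γ μ ν gs = gs := by
  exact ⟨tmf_continuous hT lam α A Γ μ hmom ν,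
    fun g _ k => tmf_mem hT lam α A Γ μ hmom ν g k,
    tmf_fixed hT lam α A Γ μ hmom ν⟩
end

section
/- For every fixed k ∈ {0, …, T−1}, e ∈ ℝⁿ, and a ∈ {0,1}, the map g ↦ Q^g_k(e, a) is continuous on ℝ^T (with the sup norm); indeed it is Lipschitz continuous with Lipschitz constant λT. -/
open MeasureTheory Matrix

section AuxLemmas

section Aux
variable {n : ℕ}

lemma abs_dot_le (x y : Fin n → ℝ) : |x ⬝ᵥ y| ≤ n * (‖x‖ * ‖y‖) := by
  calc |x ⬝ᵥ y| ≤ ∑ i, |x i * y i| := Finset.abs_sum_le_sum_abs _ _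
    _ ≤ ∑ _i : Fin n, ‖x‖ * ‖y‖ := by
        refine Finset.sum_le_sum fun i _ => ?_
        rw [abs_mul]
        exact mul_le_mul (norm_le_pi_norm x i) (norm_le_pi_norm y i) (abs_nonneg _) (norm_nonneg _)
    _ = n * (‖x‖ * ‖y‖) := by simp [Finset.sum_const, Finset.card_univ]

lemma mulVec_bound (M : Matrix (Fin n) (Fin n) ℝ) :
    ∃ K, 0 ≤ K ∧ ∀ x : Fin n → ℝ, ‖M *ᵥ x‖ ≤ K * ‖x‖ := by
  let L := LinearMap.toContinuousLinearMap (M.mulVecLin)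
  refine ⟨‖L‖, norm_nonneg _, fun x => ?_⟩
  have := L.le_opNorm x
  simpa [L, Matrix.mulVecLin_apply] using this

lemma quad_bound (M : Matrix (Fin n) (Fin n) ℝ) :
    ∃ K, 0 ≤ K ∧ ∀ x : Fin n → ℝ, |x ⬝ᵥ (M *ᵥ x)| ≤ K * (1 + ‖x‖ ^ 2) := by
  obtain ⟨K, hK0, hK⟩ := mulVec_bound M
  refine ⟨n * K, by positivity, fun x => ?_⟩
  have h1 := abs_dot_le x (M *ᵥ x)
  have h2 := hK x
  have h3 : (0:ℝ) ≤ ‖x‖ := norm_nonneg _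
  nlinarith [sq_nonneg (‖x‖), mul_le_mul_of_nonneg_left h2 h3]

lemma quad_cont (M : Matrix (Fin n) (Fin n) ℝ) :
    Continuous fun x : Fin n → ℝ => x ⬝ᵥ (M *ᵥ x) :=
  continuous_id.dotProduct (continuous_const.matrix_mulVec continuous_id)

end Aux

section Shift
variable {n : ℕ} {μ : Measure (Fin n → ℝ)} [IsProbabilityMeasure μ]
  (hmom : Integrable (fun w => ‖w‖ ^ 2) μ)
  {f : (Fin n → ℝ) → ℝ} (hf : Continuous f) {C : ℝ} (hC : 0 ≤ C)
  (hbd : ∀ x, |f x| ≤ C * (1 + ‖x‖ ^ 2))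

include hmom hf hC hbd in
lemma integ_shift (v : Fin n → ℝ) : Integrable (fun w => f (v + w)) μ := by
  have hmeas : AEStronglyMeasurable (fun w => f (v + w)) μ :=
    (hf.comp (continuous_const.add continuous_id)).aestronglyMeasurable
  refine Integrable.mono (g := fun w => C * (1 + 2 * ‖v‖ ^ 2) + 2 * C * ‖w‖ ^ 2)
    (by exact (integrable_const _).add (hmom.const_mul _)) hmeas (ae_of_all _ fun w => ?_)
  have h1 := hbd (v + w)
  have h2 : ‖v + w‖ ≤ ‖v‖ + ‖w‖ := norm_add_le _ _
  have h3 : (0:ℝ) ≤ ‖v‖ := norm_nonneg _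
  have h4 : (0:ℝ) ≤ ‖w‖ := norm_nonneg _
  have h5 : (0:ℝ) ≤ ‖v + w‖ := norm_nonneg _
  simp only [Real.norm_eq_abs]
  have h6 : ‖v + w‖ ^ 2 ≤ (‖v‖ + ‖w‖) ^ 2 := pow_le_pow_left₀ h5 h2 2
  have hb : C * (1 + ‖v + w‖ ^ 2) ≤ C * (1 + 2 * ‖v‖ ^ 2) + 2 * C * ‖w‖ ^ 2 := by
    nlinarith [mul_le_mul_of_nonneg_left h6 hC, mul_nonneg hC (sq_nonneg (‖v‖ - ‖w‖))]
  have hpos : (0:ℝ) ≤ C * (1 + 2 * ‖v‖ ^ 2) + 2 * C * ‖w‖ ^ 2 := by positivity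
  rw [abs_of_nonneg hpos]
  exact h1.trans hb

include hmom hf hC hbd in
lemma integ_shift_bound (v : Fin n → ℝ) :
    |∫ w, f (v + w) ∂μ| ≤ C * (1 + 2 * ‖v‖ ^ 2) + 2 * C * (∫ w, ‖w‖ ^ 2 ∂μ) := by
  have hb : ∀ w : Fin n → ℝ, ‖f (v + w)‖ ≤ C * (1 + 2 * ‖v‖ ^ 2) + 2 * C * ‖w‖ ^ 2 := by
    intro w
    have h1 := hbd (v + w)
    have h2 : ‖v + w‖ ≤ ‖v‖ + ‖w‖ := norm_add_le _ _
    rw [Real.norm_eq_abs]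
    refine h1.trans ?_
    have h6 : ‖v + w‖ ^ 2 ≤ (‖v‖ + ‖w‖) ^ 2 := pow_le_pow_left₀ (norm_nonneg _) h2 2
    nlinarith [mul_le_mul_of_nonneg_left h6 hC, mul_nonneg hC (sq_nonneg (‖v‖ - ‖w‖))]
  have := norm_integral_le_of_norm_le (μ := μ)
    ((integrable_const (C * (1 + 2 * ‖v‖ ^ 2))).add (hmom.const_mul (2 * C)))
    (ae_of_all _ hb)
  rw [Real.norm_eq_abs] at this
  simp only [Pi.add_apply] at this
  refine this.trans ?_
  rw [integral_add (integrable_const _) (hmom.const_mul _), integral_const,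
    integral_const_mul]
  simp

include hmom hf hC hbd in
set_option maxHeartbeats 1000000 in
lemma cont_shift_integral (A : Matrix (Fin n) (Fin n) ℝ) (s : ℝ) (hs : |s| ≤ 1) :
    Continuous fun e : Fin n → ℝ => ∫ w, f (s • (A *ᵥ e) + w) ∂μ := by
  rw [continuous_iff_continuousAt]
  intro e₀
  obtain ⟨K, hK0, hK⟩ := mulVec_bound A
  set R : ℝ := K * (‖e₀‖ + 1) with hR
  have hR0 : 0 ≤ R := by positivity
  apply continuousAt_of_dominated (bound := fun w => C * (1 + 2 * R ^ 2) + 2 * C * ‖w‖ ^ 2)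
  · exact Filter.Eventually.of_forall fun e =>
      (hf.comp (continuous_const.add continuous_id)).aestronglyMeasurable
  · have hball : Metric.ball e₀ 1 ∈ nhds e₀ := Metric.ball_mem_nhds e₀ one_pos
    refine Filter.eventually_of_mem hball fun e he => ae_of_all _ fun w => ?_
    have hv : ‖s • (A *ᵥ e) + w‖ ≤ R + ‖w‖ := by
      have h1 : ‖s • (A *ᵥ e)‖ ≤ R := by
        rw [norm_smul, Real.norm_eq_abs]
        have he' : ‖e‖ ≤ ‖e₀‖ + 1 := by
          have := mem_ball_iff_norm.mp he
          have h2 := norm_sub_norm_le e e₀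
          linarith [this, h2]
        calc |s| * ‖A *ᵥ e‖ ≤ 1 * (K * ‖e‖) :=
              mul_le_mul hs (hK e) (norm_nonneg _) zero_le_one
          _ ≤ R := by rw [one_mul, hR]; exact mul_le_mul_of_nonneg_left he' hK0
      calc ‖s • (A *ᵥ e) + w‖ ≤ ‖s • (A *ᵥ e)‖ + ‖w‖ := norm_add_le _ _
        _ ≤ R + ‖w‖ := by linarith
    rw [Real.norm_eq_abs]
    refine (hbd _).trans ?_
    have h6 : ‖s • (A *ᵥ e) + w‖ ^ 2 ≤ (R + ‖w‖) ^ 2 := pow_le_pow_left₀ (norm_nonneg _) hv 2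
    nlinarith [mul_le_mul_of_nonneg_left h6 hC, mul_nonneg hC (sq_nonneg (R - ‖w‖))]
  · exact (integrable_const _).add (hmom.const_mul _)
  · exact ae_of_all _ fun w =>
      (hf.comp ((continuous_const.fun_smul (continuous_const.matrix_mulVec continuous_id)).fun_add
        continuous_const)).continuousAt

end Shift
section Main
variable {n T : ℕ} {lam : ℝ} {A : Matrix (Fin n) (Fin n) ℝ}
  {Γ : ℕ → Matrix (Fin n) (Fin n) ℝ} {μ : Measure (Fin n → ℝ)} [IsProbabilityMeasure μ]
  (hmom : Integrable (fun w => ‖w‖ ^ 2) μ)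

include hmom in
lemma step_aux_s6 (c : ℝ) {f : (Fin n → ℝ) → ℝ} (hf : Continuous f) {Cf : ℝ} (hCf : 0 ≤ Cf)
    (hbf : ∀ x, |f x| ≤ Cf * (1 + ‖x‖ ^ 2)) :
    ∃ C, 0 ≤ C ∧ ∀ a : ℝ, a = 0 ∨ a = 1 →
      (Continuous fun e : Fin n → ℝ => c * a + ∫ w, f ((1 - a) • (A *ᵥ e) + w) ∂μ) ∧
      ∀ e : Fin n → ℝ,
        |c * a + ∫ w, f ((1 - a) • (A *ᵥ e) + w) ∂μ| ≤ C * (1 + ‖e‖ ^ 2) := by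
  obtain ⟨K, hK0, hK⟩ := mulVec_bound A
  set M : ℝ := ∫ w, ‖w‖ ^ 2 ∂μ with hM
  have hM0 : 0 ≤ M := integral_nonneg fun w => by positivity
  refine ⟨|c| + Cf * (1 + 2 * M) + 2 * Cf * K ^ 2, by positivity, fun a ha => ?_⟩
  have hs : |1 - a| ≤ 1 := by rcases ha with h | h <;> simp [h]
  constructor
  · exact continuous_const.add (cont_shift_integral hmom hf hCf hbf A (1 - a) hs)
  · intro e
    have hv : ‖(1 - a) • (A *ᵥ e)‖ ≤ K * ‖e‖ := by
      rw [norm_smul, Real.norm_eq_abs]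
      calc |1 - a| * ‖A *ᵥ e‖ ≤ 1 * (K * ‖e‖) :=
            mul_le_mul hs (hK e) (norm_nonneg _) zero_le_one
        _ = K * ‖e‖ := one_mul _
    have hI := integ_shift_bound hmom hf hCf hbf ((1 - a) • (A *ᵥ e))
    rw [← hM] at hI
    have ha1 : |a| ≤ 1 := by rcases ha with h | h <;> simp [h]
    have h1 : |c * a| ≤ |c| := by
      rw [abs_mul]
      calc |c| * |a| ≤ |c| * 1 := mul_le_mul_of_nonneg_left ha1 (abs_nonneg _)
        _ = |c| := mul_one _
    have h2 := (abs_add_le _ _).trans (add_le_add h1 hI)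
    refine h2.trans ?_
    have hv2 : ‖(1 - a) • (A *ᵥ e)‖ ^ 2 ≤ (K * ‖e‖) ^ 2 :=
      pow_le_pow_left₀ (norm_nonneg _) hv 2
    nlinarith [mul_le_mul_of_nonneg_left hv2 hCf, norm_nonneg e, sq_nonneg ‖e‖,
      mul_nonneg (mul_nonneg hCf hM0) (sq_nonneg ‖e‖),
      mul_nonneg (abs_nonneg c) (sq_nonneg ‖e‖), mul_nonneg hCf (sq_nonneg ‖e‖)]

include hmom in
lemma Qrev_cont_bound (g : ℕ → ℝ) : ∀ m : ℕ, ∃ C, 0 ≤ C ∧ ∀ a : ℝ, a = 0 ∨ a = 1 →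
    (Continuous fun e : Fin n → ℝ => Qrev T lam A Γ μ g m e a) ∧
    ∀ e : Fin n → ℝ, |Qrev T lam A Γ μ g m e a| ≤ C * (1 + ‖e‖ ^ 2) := by
  intro m
  induction m with
  | zero =>
    obtain ⟨Kq, hKq0, hKq⟩ := quad_bound (Γ T)
    obtain ⟨C, hC0, hC⟩ := step_aux_s6 hmom (lam * g (T - 1)) (quad_cont (Γ T)) hKq0 hKq
    exact ⟨C, hC0, fun a ha => by simpa only [Qrev] using hC a ha⟩
  | succ m ih =>
    obtain ⟨Cm, hCm0, hIH⟩ := ih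
    obtain ⟨Kq, hKq0, hKq⟩ := quad_bound (Γ (T - (m + 1)))
    set f : (Fin n → ℝ) → ℝ := fun x =>
      x ⬝ᵥ (Γ (T - (m + 1)) *ᵥ x) +
        min (Qrev T lam A Γ μ g m x 0) (Qrev T lam A Γ μ g m x 1) with hfdef
    have hfc : Continuous f :=
      (quad_cont _).add ((hIH 0 (Or.inl rfl)).1.min (hIH 1 (Or.inr rfl)).1)
    have hfb : ∀ x, |f x| ≤ (Kq + Cm) * (1 + ‖x‖ ^ 2) := by
      intro x
      have h1 : |min (Qrev T lam A Γ μ g m x 0) (Qrev T lam A Γ μ g m x 1)| ≤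
          Cm * (1 + ‖x‖ ^ 2) :=
        (abs_min_le_max_abs_abs).trans
          (max_le ((hIH 0 (Or.inl rfl)).2 x) ((hIH 1 (Or.inr rfl)).2 x))
      have := (abs_add_le _ _).trans (add_le_add (hKq x) h1)
      refine this.trans ?_
      ring_nf
      nlinarith [sq_nonneg ‖x‖]
    obtain ⟨C, hC0, hC⟩ :=
      step_aux_s6 hmom (lam * g (T - 1 - (m + 1))) hfc (by positivity) hfb
    exact ⟨C, hC0, fun a ha => by simpa only [Qrev, hfdef] using hC a ha⟩

include hmom in
lemma Qrev_lip (hlam : 0 ≤ lam) : ∀ (m : ℕ) (g g' : ℕ → ℝ) (δ : ℝ), 0 ≤ δ →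
    (∀ j, |g j - g' j| ≤ δ) → ∀ (e : Fin n → ℝ) (a : ℝ), a = 0 ∨ a = 1 →
    |Qrev T lam A Γ μ g m e a - Qrev T lam A Γ μ g' m e a| ≤ lam * ((m : ℝ) + 1) * δ := by
  intro m
  induction m with
  | zero =>
    intro g g' δ hδ hgg e a ha
    have ha1 : |a| ≤ 1 := by rcases ha with h | h <;> simp [h]
    simp only [Qrev]
    have hrw : lam * g (T - 1) * a +
          (∫ w, ((1 - a) • (A *ᵥ e) + w) ⬝ᵥ ((Γ T) *ᵥ ((1 - a) • (A *ᵥ e) + w)) ∂μ) -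
        (lam * g' (T - 1) * a +
          ∫ w, ((1 - a) • (A *ᵥ e) + w) ⬝ᵥ ((Γ T) *ᵥ ((1 - a) • (A *ᵥ e) + w)) ∂μ) =
        lam * ((g (T - 1) - g' (T - 1)) * a) := by ring
    rw [hrw, abs_mul, abs_mul, abs_of_nonneg hlam]
    have hstep : lam * (|g (T - 1) - g' (T - 1)| * |a|) ≤ lam * (δ * 1) := by
      refine mul_le_mul_of_nonneg_left ?_ hlam
      exact mul_le_mul (hgg _) ha1 (abs_nonneg _) hδ
    refine hstep.trans ?_
    push_cast
    nlinarith
  | succ m ih =>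
    intro g g' δ hδ hgg e a ha
    have ha1 : |a| ≤ 1 := by rcases ha with h | h <;> simp [h]
    obtain ⟨Cg, hCg0, hIg⟩ := Qrev_cont_bound hmom g m
    obtain ⟨Cg', hCg'0, hIg'⟩ := Qrev_cont_bound hmom g' m
    obtain ⟨Kq, hKq0, hKq⟩ := quad_bound (Γ (T - (m + 1)))
    set j := T - 1 - (m + 1)
    set v : Fin n → ℝ := (1 - a) • (A *ᵥ e) with hv
    set fg : (Fin n → ℝ) → ℝ := fun x =>
      x ⬝ᵥ (Γ (T - (m + 1)) *ᵥ x) +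
        min (Qrev T lam A Γ μ g m x 0) (Qrev T lam A Γ μ g m x 1) with hfg
    set fg' : (Fin n → ℝ) → ℝ := fun x =>
      x ⬝ᵥ (Γ (T - (m + 1)) *ᵥ x) +
        min (Qrev T lam A Γ μ g' m x 0) (Qrev T lam A Γ μ g' m x 1) with hfg'
    have hfgc : Continuous fg :=
      (quad_cont _).add ((hIg 0 (Or.inl rfl)).1.min (hIg 1 (Or.inr rfl)).1)
    have hfg'c : Continuous fg' :=
      (quad_cont _).add ((hIg' 0 (Or.inl rfl)).1.min (hIg' 1 (Or.inr rfl)).1)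
    have hfgb : ∀ x, |fg x| ≤ (Kq + Cg) * (1 + ‖x‖ ^ 2) := by
      intro x
      have h1 := (abs_min_le_max_abs_abs).trans
        (max_le ((hIg 0 (Or.inl rfl)).2 x) ((hIg 1 (Or.inr rfl)).2 x))
      have := (abs_add_le _ _).trans (add_le_add (hKq x) h1)
      refine this.trans ?_; nlinarith [sq_nonneg ‖x‖]
    have hfg'b : ∀ x, |fg' x| ≤ (Kq + Cg') * (1 + ‖x‖ ^ 2) := by
      intro x
      have h1 := (abs_min_le_max_abs_abs).trans
        (max_le ((hIg' 0 (Or.inl rfl)).2 x) ((hIg' 1 (Or.inr rfl)).2 x))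
      have := (abs_add_le _ _).trans (add_le_add (hKq x) h1)
      refine this.trans ?_; nlinarith [sq_nonneg ‖x‖]
    have hint_g : Integrable (fun w => fg (v + w)) μ :=
      integ_shift hmom hfgc (by positivity) hfgb v
    have hint_g' : Integrable (fun w => fg' (v + w)) μ :=
      integ_shift hmom hfg'c (by positivity) hfg'b v
    have hdiff : ∀ w : Fin n → ℝ, ‖fg (v + w) - fg' (v + w)‖ ≤ lam * ((m : ℝ) + 1) * δ := by
      intro w
      have hr : fg (v + w) - fg' (v + w) =
          min (Qrev T lam A Γ μ g m (v + w) 0) (Qrev T lam A Γ μ g m (v + w) 1) -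
          min (Qrev T lam A Γ μ g' m (v + w) 0) (Qrev T lam A Γ μ g' m (v + w) 1) := by
        simp only [hfg, hfg']; ring
      rw [Real.norm_eq_abs, hr]
      exact (abs_min_sub_min_le_max _ _ _ _).trans
        (max_le (ih g g' δ hδ hgg (v + w) 0 (Or.inl rfl))
          (ih g g' δ hδ hgg (v + w) 1 (Or.inr rfl)))
    have hIbd : ‖∫ w, (fg (v + w) - fg' (v + w)) ∂μ‖ ≤ lam * ((m : ℝ) + 1) * δ := by
      have := norm_integral_le_of_norm_le_const (μ := μ)
        (f := fun w => fg (v + w) - fg' (v + w)) (ae_of_all _ hdiff)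
      simpa using this
    simp only [Qrev]
    have hrw : (lam * g (T - 1 - (m + 1)) * a + ∫ w, fg (v + w) ∂μ) -
        (lam * g' (T - 1 - (m + 1)) * a + ∫ w, fg' (v + w) ∂μ) =
        lam * ((g (T - 1 - (m + 1)) - g' (T - 1 - (m + 1))) * a) +
          ∫ w, (fg (v + w) - fg' (v + w)) ∂μ := by
      rw [integral_sub hint_g hint_g']; ring
    rw [show (((1 : ℝ) - a) • (A *ᵥ e)) = v from rfl]
    calc |(lam * g (T - 1 - (m + 1)) * a + ∫ w, fg (v + w) ∂μ) -
          (lam * g' (T - 1 - (m + 1)) * a + ∫ w, fg' (v + w) ∂μ)| ≤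
        |lam * ((g (T - 1 - (m + 1)) - g' (T - 1 - (m + 1))) * a)| +
          |∫ w, (fg (v + w) - fg' (v + w)) ∂μ| := by rw [hrw]; exact abs_add_le _ _
      _ ≤ lam * δ + lam * ((m : ℝ) + 1) * δ := by
          refine add_le_add ?_ (by rw [← Real.norm_eq_abs]; exact hIbd)
          rw [abs_mul, abs_mul, abs_of_nonneg hlam]
          calc lam * (|g (T - 1 - (m + 1)) - g' (T - 1 - (m + 1))| * |a|) ≤
              lam * (δ * 1) := mul_le_mul_of_nonneg_left
                (mul_le_mul (hgg _) ha1 (abs_nonneg _) hδ) hlam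
            _ = lam * δ := by ring
      _ ≤ lam * (((m : ℕ) + 1 : ℕ) + 1 : ℝ) * δ := by push_cast; nlinarith

end Main

end AuxLemmas

/-- For fixed `k`, `e`, `a ∈ {0,1}`, the map `g ↦ Q^g_k(e,a)` is continuous on
`ℝ^T` (sup norm); indeed it is Lipschitz continuous with Lipschitz constant `λT`. -/
theorem Q_continuous_in_mean_field
    {n T : ℕ} (hT : 1 ≤ T) (lam : ℝ) (hlam : 0 < lam)
    (A : Matrix (Fin n) (Fin n) ℝ) (Γ : ℕ → Matrix (Fin n) (Fin n) ℝ)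
    (hΓ : ∀ k, (Γ k).PosSemidef)
    (μ : Measure (Fin n → ℝ)) [IsProbabilityMeasure μ]
    (hmom : Integrable (fun w => ‖w‖ ^ 2) μ)
    (k : ℕ) (hk : k < T) (e : Fin n → ℝ) (a : ℝ) (ha : a = 0 ∨ a = 1) :
    Continuous (fun g : Fin T → ℝ => Qval T lam A Γ μ (extendSeq T g) k e a) ∧
      LipschitzWith (Real.toNNReal (lam * (T : ℝ)))
        (fun g : Fin T → ℝ => Qval T lam A Γ μ (extendSeq T g) k e a) := by
  have hlam0 : 0 ≤ lam := hlam.le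
  set m := T - 1 - k with hm
  have hmT : ((m : ℝ) + 1) ≤ (T : ℝ) := by
    have h1 : m + 1 ≤ T := by omega
    exact_mod_cast h1
  have hlip : LipschitzWith (Real.toNNReal (lam * (T : ℝ)))
      (fun g : Fin T → ℝ => Qval T lam A Γ μ (extendSeq T g) k e a) := by
    apply LipschitzWith.of_dist_le_mul
    intro g g'
    have hδ : (0:ℝ) ≤ dist g g' := dist_nonneg
    have hgg : ∀ j, |extendSeq T g j - extendSeq T g' j| ≤ dist g g' := by
      intro j
      unfold extendSeq
      by_cases h : j < T
      · simp only [dif_pos h]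
        rw [← Real.dist_eq]
        exact dist_le_pi_dist g g' ⟨j, h⟩
      · simpa [dif_neg h] using hδ
    have hQ := Qrev_lip (T := T) (A := A) (Γ := Γ) hmom hlam0 m (extendSeq T g) (extendSeq T g') (dist g g') hδ hgg e a ha
    rw [Real.dist_eq]
    have hcoe : ((Real.toNNReal (lam * (T : ℝ)) : NNReal) : ℝ) = lam * T :=
      Real.coe_toNNReal _ (by positivity)
    rw [hcoe]
    simp only [Qval, ← hm]
    refine hQ.trans ?_
    have := mul_le_mul_of_nonneg_left hmT hlam0
    exact mul_le_mul_of_nonneg_right this hδ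
  exact ⟨hlip.continuous, hlip⟩
end
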